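/- arXiv:2010.04780 — 2 statements merged into one kernel-verified Lean document; each statement's English description precedes it below -/
import Mathlib

section
/- With the same setup, setting Ω₁(X,Y) = Tr(ψ_j(S)(X,Y)∘j) and Ω₂(X,Y) = Ω₁(jX,jY) - Ω₁(X,Y), one has Ω₂(X,Y) = -8(n+1)·S(X,jY) for all X, Y ∈ V. -/
open LinearMap TensorProduct

section aux

variable {V : Type*} [AddCommGroup V] [Module ℝ V] [FiniteDimensional ℝ V]

lemma trace_smulRight_aux (f : V →ₗ[ℝ] ℝ) (v : V) :
    LinearMap.trace ℝ V (f.smulRight v) = f v := by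
  have h := LinearMap.trace_eq_contract_apply ℝ V (f ⊗ₜ[ℝ] v)
  have h2 : dualTensorHom ℝ V V (f ⊗ₜ[ℝ] v) = f.smulRight v := by
    ext z; simp [dualTensorHom_apply]
  rw [h2] at h
  simpa using h

lemma smulRight_comp_aux (f : V →ₗ[ℝ] ℝ) (v : V) (j : V →ₗ[ℝ] V) :
    (f.smulRight v) ∘ₗ j = (f ∘ₗ j).smulRight v := by
  ext z; simp

end aux

/-- With `Ω₁(X,Y) = Tr(ψ_j(S)(X,Y)∘j)` and `Ω₂(X,Y) = Ω₁(jX,jY) - Ω₁(X,Y)`, one has `Ω₂(X,Y) = -8(n+1) S(X,jY)` for all `X, Y`. -/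
theorem omega2_psi
    (V : Type*) [AddCommGroup V] [Module ℝ V] [FiniteDimensional ℝ V]
    (n : ℕ) (hdim : Module.finrank ℝ V = 2 * n)
    (g : V →ₗ[ℝ] V →ₗ[ℝ] ℝ)
    (hnd : ∀ X : V, (∀ Y : V, g X Y = 0) → X = 0)
    (hgsym : ∀ X Y : V, g X Y = g Y X)
    (j : V →ₗ[ℝ] V) (hj : j ∘ₗ j = -LinearMap.id)
    (hcompat : ∀ X Y : V, g (j X) (j Y) = g X Y)
    (S : V →ₗ[ℝ] V →ₗ[ℝ] ℝ)
    (hSanti : ∀ X Y : V, S X Y = -S Y X)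
    (hSj : ∀ X Y : V, S (j X) (j Y) = -S X Y)
    (ψ : V → V → (V →ₗ[ℝ] V))
    (hψ : ∀ X Y Z W : V, g (ψ X Y Z) W
      = 2 * g X (j Y) * S Z (j W) + 2 * g Z (j W) * S X (j Y)
        + g X (j Z) * S Y (j W) + g Y (j W) * S X (j Z)
        - g X (j W) * S Y (j Z) - g Y (j Z) * S X (j W)) :
    ∀ X Y : V, LinearMap.trace ℝ V (ψ (j X) (j Y) ∘ₗ j)
        - LinearMap.trace ℝ V (ψ X Y ∘ₗ j)
      = -8 * ((n : ℝ) + 1) * S X (j Y) := by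
  intro X Y
  have hjj : ∀ Z : V, j (j Z) = -Z := by
    intro Z
    have := LinearMap.ext_iff.mp hj Z
    simpa using this
  -- g (j A) B = - g A (j B)
  have hgj : ∀ A B : V, g (j A) B = -(g A (j B)) := by
    intro A B
    have h1 := hcompat A (j B)
    rw [hjj B] at h1
    have h2 : g (j A) (-B) = -(g (j A) B) := map_neg _ _
    rw [h2] at h1
    linarith
  -- S (j A) B = S A (j B)
  have hSjj : ∀ A B : V, S (j A) B = S A (j B) := by
    intro A B
    have h1 := hSj A (j B)
    rw [hjj B] at h1
    have h2 : S (j A) (-B) = -(S (j A) B) := map_neg _ _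
    rw [h2] at h1
    linarith
  -- S A (j B) = - S B (j A)
  have hS2 : ∀ A B : V, S A (j B) = -(S B (j A)) := by
    intro A B
    rw [← hSjj A B, hSanti (j A) B]
  -- Riesz representation
  have hnd' : LinearMap.BilinForm.Nondegenerate g :=
    ⟨hnd, fun Y hY => hnd Y (fun Z => by rw [hgsym]; exact hY Z)⟩
  set e := LinearMap.BilinForm.toDual g hnd' with he
  set sX := e.symm (S X) with hsXdef
  set sY := e.symm (S Y) with hsYdef
  set tX := e.symm ((S X) ∘ₗ j) with htXdef
  set tY := e.symm ((S Y) ∘ₗ j) with htYdef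
  have hsX : ∀ W : V, g sX W = S X W := fun W =>
    LinearMap.BilinForm.apply_toDual_symm_apply (hB := hnd') (S X) W
  have hsY : ∀ W : V, g sY W = S Y W := fun W =>
    LinearMap.BilinForm.apply_toDual_symm_apply (hB := hnd') (S Y) W
  have htX : ∀ W : V, g tX W = S X (j W) := fun W =>
    LinearMap.BilinForm.apply_toDual_symm_apply (hB := hnd') ((S X) ∘ₗ j) W
  have htY : ∀ W : V, g tY W = S Y (j W) := fun W =>
    LinearMap.BilinForm.apply_toDual_symm_apply (hB := hnd') ((S Y) ∘ₗ j) W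
  -- the difference map
  set Δ : V →ₗ[ℝ] V :=
    (4 * S X (j Y)) • j
      - (g X).smulRight sY - ((g X) ∘ₗ j).smulRight tY
      - (S X).smulRight Y + ((S X) ∘ₗ j).smulRight (j Y)
      + (S Y).smulRight X - ((S Y) ∘ₗ j).smulRight (j X)
      + (g Y).smulRight sX + ((g Y) ∘ₗ j).smulRight tX with hΔdef
  have hkey : ψ (j X) (j Y) - ψ X Y = Δ := by
    ext Z
    apply sub_eq_zero.mp
    apply hnd
    intro W
    have h1 := hψ (j X) (j Y) Z W
    have h2 := hψ X Y Z W
    have h3 : g (Δ Z) W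
        = 4 * S X (j Y) * g (j Z) W
          - g X Z * S Y W - g X (j Z) * S Y (j W)
          - S X Z * g Y W + S X (j Z) * g (j Y) W
          + S Y Z * g X W - S Y (j Z) * g (j X) W
          + g Y Z * S X W + g Y (j Z) * S X (j W) := by
      simp only [hΔdef, LinearMap.sub_apply, LinearMap.add_apply, LinearMap.smul_apply,
        LinearMap.smulRight_apply, LinearMap.comp_apply, map_add, map_sub, map_smul,
        smul_eq_mul, LinearMap.add_apply, LinearMap.sub_apply]
      rw [hsY W, htY W, hsX W, htX W]
      try ring
    simp only [LinearMap.sub_apply]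
    have h4 : g ((ψ (j X) (j Y)) Z - (ψ X Y) Z - Δ Z) W
        = g ((ψ (j X) (j Y)) Z) W - g ((ψ X Y) Z) W - g (Δ Z) W := by
      simp [map_sub]
    rw [h4, h1, h2, h3]
    simp only [hcompat, hSj, hgj]
    ring
  -- trace computation
  have htr : LinearMap.trace ℝ V (ψ (j X) (j Y) ∘ₗ j) - LinearMap.trace ℝ V (ψ X Y ∘ₗ j)
      = LinearMap.trace ℝ V (Δ ∘ₗ j) := by
    rw [← hkey, LinearMap.sub_comp, map_sub]
  rw [htr]
  have hjcomp : ((4 * S X (j Y)) • j) ∘ₗ j = (4 * S X (j Y)) • (j ∘ₗ j) :=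
    LinearMap.smul_comp _ _ _
  have htrjj : LinearMap.trace ℝ V (j ∘ₗ j) = -(2 * n : ℝ) := by
    rw [hj]
    simp [LinearMap.trace_id, hdim]
  rw [hΔdef]
  simp only [LinearMap.sub_comp, LinearMap.add_comp, smulRight_comp_aux, hjcomp,
    map_sub, map_add, map_smul, trace_smulRight_aux, smul_eq_mul, htrjj,
    LinearMap.comp_apply]
  -- now everything is scalar; evaluate the functionals
  have e1 : g X (j sY) = S X (j Y) := by
    have h0 := hgj X sY
    rw [hgsym (j X) sY, hsY (j X)] at h0
    have h5 := hS2 Y X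
    linarith
  have e2 : g X tY = -(S X (j Y)) := by
    rw [hgsym X tY, htY X, hS2 Y X]
  have e3 : g Y (j sX) = -(S X (j Y)) := by
    have h0 := hgj Y sX
    rw [hgsym (j Y) sX, hsX (j Y)] at h0
    linarith
  have e4 : g Y tX = S X (j Y) := by
    rw [hgsym Y tX, htX Y]
  have e5 : S Y (j X) = -(S X (j Y)) := hS2 Y X
  simp only [hjj, map_neg, neg_neg, e1, e2, e3, e4, e5]
  push_cast
  ring
end

section
/- Let (V,Ω) be a symplectic vector space with compatible complex structure j, and let E(r) be the Ricci-type curvature built from a symmetric bilinear form r. Then Tr_ℝ(E(r)(jX,jY)∘j) = Tr_ℝ(E(r)(X,Y)∘j) for all X, Y ∈ V; i.e. the 2-form (X,Y) ↦ Tr(E(r)(X,Y)∘j) is of type (1,1) with respect to j. -/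
open LinearMap

lemma trace_smulRight' (V : Type*) [AddCommGroup V] [Module ℝ V] [FiniteDimensional ℝ V]
    (f : V →ₗ[ℝ] ℝ) (v : V) :
    LinearMap.trace ℝ V (f.smulRight v) = f v := by
  have : f.smulRight v = dualTensorHom ℝ V V (f ⊗ₜ v) := by
    ext x; simp [dualTensorHom_apply]
  rw [this, trace_eq_contract_apply]
  simp

lemma smulRight_comp' (V : Type*) [AddCommGroup V] [Module ℝ V]
    (f : V →ₗ[ℝ] ℝ) (v : V) (j : V →ₗ[ℝ] V) :
    f.smulRight v ∘ₗ j = (f ∘ₗ j).smulRight v := by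
  ext x; simp

/-- For the symplectic Ricci-type curvature `E(r)` and a
compatible complex structure `j`, the 2-form `(X,Y) ↦ Tr(E(r)(X,Y)∘j)` is of
type `(1,1)`: `Tr_ℝ(E(r)(jX,jY)∘j) = Tr_ℝ(E(r)(X,Y)∘j)` for all `X, Y`. -/
theorem trace_symplectic_E_j_invariant
    (V : Type*) [AddCommGroup V] [Module ℝ V] [FiniteDimensional ℝ V]
    (n : ℕ) (hdim : Module.finrank ℝ V = 2 * n)
    (Ω : V →ₗ[ℝ] V →ₗ[ℝ] ℝ)
    (hnd : ∀ X : V, (∀ Y : V, Ω X Y = 0) → X = 0)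
    (hΩanti : ∀ X Y : V, Ω X Y = -Ω Y X)
    (j : V →ₗ[ℝ] V) (hj : j ∘ₗ j = -LinearMap.id)
    (hcompat : ∀ X Y : V, Ω (j X) (j Y) = Ω X Y)
    (r : V →ₗ[ℝ] V →ₗ[ℝ] ℝ)
    (hrsym : ∀ X Y : V, r X Y = r Y X)
    (E : V → V → (V →ₗ[ℝ] V))
    (hE : ∀ X Y Z T : V, Ω (E X Y Z) T
      = (-1 / (2 * ((n : ℝ) + 1)))
        * (2 * Ω X Y * r Z T + Ω X Z * r Y T - Ω Y Z * r X T
            + r Y Z * Ω X T - r X Z * Ω Y T)) :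
    ∀ X Y : V, LinearMap.trace ℝ V (E (j X) (j Y) ∘ₗ j)
      = LinearMap.trace ℝ V (E X Y ∘ₗ j) := by
  intro X Y
  set c : ℝ := -1 / (2 * ((n : ℝ) + 1)) with hc
  have hΩinj : Function.Injective (Ω : V →ₗ[ℝ] Module.Dual ℝ V) := by
    rw [injective_iff_map_eq_zero]
    intro x hx
    exact hnd x fun y => by rw [show Ω x y = (0 : Module.Dual ℝ V) y from by rw [← hx]]; rfl
  have hdual : Module.finrank ℝ V = Module.finrank ℝ (Module.Dual ℝ V) :=
    (Subspace.dual_finrank_eq).symm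
  let e : V ≃ₗ[ℝ] Module.Dual ℝ V :=
    LinearMap.linearEquivOfInjective (Ω : V →ₗ[ℝ] Module.Dual ℝ V) hΩinj hdual
  let ρ : V →ₗ[ℝ] V := e.symm.toLinearMap ∘ₗ (r : V →ₗ[ℝ] Module.Dual ℝ V)
  have hρ : ∀ u T : V, Ω (ρ u) T = r u T := by
    intro u T
    have h : Ω (ρ u) = r u := by
      show e (e.symm (r u)) = r u
      exact e.apply_symm_apply _
    rw [h]
  have hEeq : ∀ A B : V, E A B = c • ((2 * Ω A B) • ρ
      + ((Ω A).smulRight (ρ B) - (Ω B).smulRight (ρ A)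
        + (r B).smulRight A - (r A).smulRight B)) := by
    intro A B
    ext Z
    apply sub_eq_zero.mp
    apply hnd
    intro T
    rw [map_sub, LinearMap.sub_apply, sub_eq_zero, hE]
    simp only [LinearMap.smul_apply, LinearMap.add_apply, LinearMap.sub_apply, smulRight_apply, map_add, map_sub, map_smul,
      smul_eq_mul, hρ]
    ring
  have htr : ∀ A B : V, LinearMap.trace ℝ V (E A B ∘ₗ j)
      = c * (2 * Ω A B * LinearMap.trace ℝ V (ρ ∘ₗ j)
        + Ω A (j (ρ B)) - Ω B (j (ρ A)) + r B (j A) - r A (j B)) := by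
    intro A B
    rw [hEeq A B]
    simp only [smul_comp, add_comp, sub_comp, smulRight_comp', map_smul, map_add, map_sub,
      trace_smulRight', smul_eq_mul, comp_apply]
    ring
  have hjj : ∀ x : V, j (j x) = -x := by
    intro x
    have h := congrArg (fun f => f x) hj
    simpa using h
  have h1 : ∀ u v : V, Ω u (j (ρ v)) = r v (j u) := by
    intro u v
    have h := hcompat (ρ v) (j u)
    rw [hjj, map_neg, hρ] at h
    rw [hΩanti]
    exact h
  have h2 : ∀ u v : V, Ω u (ρ v) = -r v u := by
    intro u v
    rw [hΩanti, hρ]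
  rw [htr, htr]
  simp only [hcompat, h1, h2, hjj, map_neg]
  linear_combination (2 * c) * (hrsym (j X) Y) - (2 * c) * (hrsym (j Y) X)
end
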